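/- Let ρ be any 2×2 complex matrix and w_ρ(m,α,β) = Tr(ρ · U(m,α,β)) its qubit tomogram. Define the kernel K_x(m,α,β; m',α',β') = (1/2)·δ_{m m'}·(1 + 3 cos α sin β cos α' sin β' − 3 sin α sin β sin α' sin β' − 3 cos β cos β'). Then for all m ∈ {−1/2,1/2} and real α, β: Σ_{m' ∈ {−1/2,1/2}} (1/(2π)) ∫₀^{2π} ∫₀^{π} K_x(m,α,β; m',α',β') · w_ρ(m',α',β') · sin β' dβ' dα' = Tr(σ_x ρ σ_x · U(m,α,β)). -/

import Mathlib

open Matrix Real MeasureTheory intervalIntegral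

noncomputable def sigmaX : Matrix (Fin 2) (Fin 2) ℂ := !![0, 1; 1, 0]
noncomputable def sigmaY : Matrix (Fin 2) (Fin 2) ℂ := !![0, -Complex.I; Complex.I, 0]
noncomputable def sigmaZ : Matrix (Fin 2) (Fin 2) ℂ := !![1, 0; 0, -1]

/-- The qubit de-quantizer U(m, α, β). -/
noncomputable def dequantizer (m α β : ℝ) : Matrix (Fin 2) (Fin 2) ℂ :=
  (1/2 : ℂ) • (1 : Matrix (Fin 2) (Fin 2) ℂ)
    - ((m * Real.cos α * Real.sin β : ℝ) : ℂ) • sigmaX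
    - ((m * Real.sin α * Real.sin β : ℝ) : ℂ) • sigmaY
    + ((m * Real.cos β : ℝ) : ℂ) • sigmaZ

/-- The qubit tomogram of a 2×2 complex matrix ρ. -/
noncomputable def tomogram (ρ : Matrix (Fin 2) (Fin 2) ℂ) (m α β : ℝ) : ℂ :=
  (ρ * dequantizer m α β).trace

/-- The tomographic kernel of the channel ρ ↦ sigmaX ρ sigmaX. -/
noncomputable def kernelX (m α β m' α' β' : ℝ) : ℝ :=
  (1/2) * (if m = m' then (1:ℝ) else 0) *
    (1 + 3 * Real.cos α * Real.sin β * Real.cos α' * Real.sin β'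
      - 3 * Real.sin α * Real.sin β * Real.sin α' * Real.sin β'
      - 3 * Real.cos β * Real.cos β')

lemma tomogram_eq (ρ : Matrix (Fin 2) (Fin 2) ℂ) (m α β : ℝ) :
    tomogram ρ m α β
      = (1/2 + (m:ℂ)*Real.cos β) * ρ 0 0
        + (-((m:ℂ)*Real.cos α*Real.sin β) - Complex.I*((m:ℂ)*Real.sin α*Real.sin β)) * ρ 0 1
        + (-((m:ℂ)*Real.cos α*Real.sin β) + Complex.I*((m:ℂ)*Real.sin α*Real.sin β)) * ρ 1 0
        + (1/2 - (m:ℂ)*Real.cos β) * ρ 1 1 := by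
  simp [tomogram, dequantizer, sigmaX, sigmaY, sigmaZ, Matrix.trace_fin_two, Matrix.mul_apply,
    Fin.sum_univ_two, Matrix.one_apply]
  ring

lemma rhs_eq (ρ : Matrix (Fin 2) (Fin 2) ℂ) (m α β : ℝ) :
    (sigmaX * ρ * sigmaX * dequantizer m α β).trace
      = (1/2 + (m:ℂ)*Real.cos β) * ρ 1 1
        + (-((m:ℂ)*Real.cos α*Real.sin β) - Complex.I*((m:ℂ)*Real.sin α*Real.sin β)) * ρ 1 0
        + (-((m:ℂ)*Real.cos α*Real.sin β) + Complex.I*((m:ℂ)*Real.sin α*Real.sin β)) * ρ 0 1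
        + (1/2 - (m:ℂ)*Real.cos β) * ρ 0 0 := by
  simp [dequantizer, sigmaX, sigmaY, sigmaZ, Matrix.trace_fin_two, Matrix.mul_apply,
    Fin.sum_univ_two, Matrix.one_apply, Matrix.vecMul, dotProduct, Matrix.vecHead,
    Matrix.vecTail]
  ring

lemma integral_basis_beta (c1 c2 c3 c4 c5 c6 : ℂ) :
    (∫ x in (0:ℝ)..π, (c1 * (Real.sin x : ℂ) + c2 * ((Real.sin x : ℂ) * (Real.cos x : ℂ))
      + c3 * (Real.sin x : ℂ)^2 + c4 * (Real.sin x : ℂ)^3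
      + c5 * ((Real.sin x : ℂ) * (Real.cos x : ℂ)^2) + c6 * ((Real.sin x : ℂ)^2 * (Real.cos x : ℂ))))
    = 2*c1 + ((π:ℂ)/2)*c3 + (4/3)*c4 + (2/3)*c5 := by
  have key : ∀ x ∈ Set.uIcc (0:ℝ) π, HasDerivAt (fun y : ℝ =>
      c1 * ((-Real.cos y : ℝ) : ℂ) + c2 * (((Real.sin y)^2/2 : ℝ) : ℂ)
      + c3 * (((y - Real.sin y * Real.cos y)/2 : ℝ) : ℂ)
      + c4 * ((-Real.cos y + (Real.cos y)^3/3 : ℝ) : ℂ)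
      + c5 * ((-(Real.cos y)^3/3 : ℝ) : ℂ) + c6 * (((Real.sin y)^3/3 : ℝ) : ℂ))
      (c1 * (Real.sin x : ℂ) + c2 * ((Real.sin x : ℂ) * (Real.cos x : ℂ))
      + c3 * (Real.sin x : ℂ)^2 + c4 * (Real.sin x : ℂ)^3
      + c5 * ((Real.sin x : ℂ) * (Real.cos x : ℂ)^2) + c6 * ((Real.sin x : ℂ)^2 * (Real.cos x : ℂ))) x := by
    intro x _
    have hsc := Real.sin_sq_add_cos_sq x
    have h1 : HasDerivAt (fun y : ℝ => -Real.cos y) (Real.sin x) x := by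
      exact (Real.hasDerivAt_cos x).neg.congr_deriv (neg_neg _)
    have h2 : HasDerivAt (fun y : ℝ => (Real.sin y)^2/2) (Real.sin x * Real.cos x) x :=
      (((Real.hasDerivAt_sin x).pow 2).div_const 2).congr_deriv (by norm_num; ring)
    have h3 : HasDerivAt (fun y : ℝ => (y - Real.sin y * Real.cos y)/2) ((Real.sin x)^2) x :=
      (((hasDerivAt_id x).sub ((Real.hasDerivAt_sin x).mul (Real.hasDerivAt_cos x))).div_const 2).congr_deriv
        (by norm_num; nlinarith [hsc])
    have h4 : HasDerivAt (fun y : ℝ => -Real.cos y + (Real.cos y)^3/3) ((Real.sin x)^3) x :=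
      (((Real.hasDerivAt_cos x).neg).add (((Real.hasDerivAt_cos x).pow 3).div_const 3)).congr_deriv
        (by norm_num; linear_combination (-Real.sin x) * hsc)
    have h5 : HasDerivAt (fun y : ℝ => -(Real.cos y)^3/3) (Real.sin x * (Real.cos x)^2) x :=
      ((((Real.hasDerivAt_cos x).pow 3).neg).div_const 3).congr_deriv (by norm_num; ring)
    have h6 : HasDerivAt (fun y : ℝ => (Real.sin y)^3/3) ((Real.sin x)^2 * Real.cos x) x :=
      (((Real.hasDerivAt_sin x).pow 3).div_const 3).congr_deriv (by norm_num; ring)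
    exact (((((((h1.ofReal_comp.const_mul c1).add (h2.ofReal_comp.const_mul c2)).add
      (h3.ofReal_comp.const_mul c3)).add (h4.ofReal_comp.const_mul c4)).add
      (h5.ofReal_comp.const_mul c5)).add (h6.ofReal_comp.const_mul c6))).congr_deriv
      (by push_cast; ring)
  rw [integral_eq_sub_of_hasDerivAt key (Continuous.intervalIntegrable (by fun_prop) _ _)]
  simp only [Real.sin_pi, Real.cos_pi, Real.sin_zero, Real.cos_zero]
  push_cast
  ring

lemma integral_basis_alpha (d0 d1 d2 d3 d4 d5 : ℂ) :
    (∫ x in (0:ℝ)..(2*π), (d0 + d1 * (Real.cos x : ℂ) + d2 * (Real.sin x : ℂ)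
      + d3 * (Real.cos x : ℂ)^2 + d4 * ((Real.cos x : ℂ) * (Real.sin x : ℂ))
      + d5 * (Real.sin x : ℂ)^2))
    = 2*(π:ℂ)*d0 + (π:ℂ)*d3 + (π:ℂ)*d5 := by
  have key : ∀ x ∈ Set.uIcc (0:ℝ) (2*π), HasDerivAt (fun y : ℝ =>
      d0 * ((y : ℝ) : ℂ) + d1 * ((Real.sin y : ℝ) : ℂ) + d2 * ((-Real.cos y : ℝ) : ℂ)
      + d3 * (((y + Real.sin y * Real.cos y)/2 : ℝ) : ℂ)
      + d4 * (((Real.sin y)^2/2 : ℝ) : ℂ)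
      + d5 * (((y - Real.sin y * Real.cos y)/2 : ℝ) : ℂ))
      (d0 + d1 * (Real.cos x : ℂ) + d2 * (Real.sin x : ℂ)
      + d3 * (Real.cos x : ℂ)^2 + d4 * ((Real.cos x : ℂ) * (Real.sin x : ℂ))
      + d5 * (Real.sin x : ℂ)^2) x := by
    intro x _
    have hsc := Real.sin_sq_add_cos_sq x
    have h0 : HasDerivAt (fun y : ℝ => y) (1:ℝ) x := hasDerivAt_id x
    have h1 := Real.hasDerivAt_sin x
    have h2 : HasDerivAt (fun y : ℝ => -Real.cos y) (Real.sin x) x := by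
      exact (Real.hasDerivAt_cos x).neg.congr_deriv (neg_neg _)
    have h3 : HasDerivAt (fun y : ℝ => (y + Real.sin y * Real.cos y)/2) ((Real.cos x)^2) x :=
      (((hasDerivAt_id x).add ((Real.hasDerivAt_sin x).mul (Real.hasDerivAt_cos x))).div_const 2).congr_deriv
        (by norm_num; nlinarith [hsc])
    have h4 : HasDerivAt (fun y : ℝ => (Real.sin y)^2/2) (Real.cos x * Real.sin x) x :=
      (((Real.hasDerivAt_sin x).pow 2).div_const 2).congr_deriv (by norm_num; ring)
    have h5 : HasDerivAt (fun y : ℝ => (y - Real.sin y * Real.cos y)/2) ((Real.sin x)^2) x :=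
      (((hasDerivAt_id x).sub ((Real.hasDerivAt_sin x).mul (Real.hasDerivAt_cos x))).div_const 2).congr_deriv
        (by norm_num; nlinarith [hsc])
    exact (((((((h0.ofReal_comp.const_mul d0).add (h1.ofReal_comp.const_mul d1)).add
      (h2.ofReal_comp.const_mul d2)).add (h3.ofReal_comp.const_mul d3)).add
      (h4.ofReal_comp.const_mul d4)).add (h5.ofReal_comp.const_mul d5))).congr_deriv
      (by push_cast; ring)
  rw [integral_eq_sub_of_hasDerivAt key (Continuous.intervalIntegrable (by fun_prop) _ _)]
  simp only [Real.sin_two_pi, Real.cos_two_pi, Real.sin_zero, Real.cos_zero]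
  push_cast
  ring

lemma master (a b c d : ℂ) (m ca sa cb sb : ℝ) (w : ℝ → ℝ → ℂ)
    (hw : ∀ x y : ℝ, w x y =
      (((1/2 * (1 + 3*ca*sb*(Real.cos x)*(Real.sin y) - 3*sa*sb*(Real.sin x)*(Real.sin y)
          - 3*cb*(Real.cos y)) : ℝ)) : ℂ)
        * ((1/2 + (m:ℂ)*(Real.cos y : ℂ)) * a
          + (-((m:ℂ)*(Real.cos x : ℂ)*(Real.sin y : ℂ)) - Complex.I*((m:ℂ)*(Real.sin x : ℂ)*(Real.sin y : ℂ))) * b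
          + (-((m:ℂ)*(Real.cos x : ℂ)*(Real.sin y : ℂ)) + Complex.I*((m:ℂ)*(Real.sin x : ℂ)*(Real.sin y : ℂ))) * c
          + (1/2 - (m:ℂ)*(Real.cos y : ℂ)) * d)
        * (Real.sin y : ℂ)) :
    (∫ x in (0:ℝ)..(2*π), ∫ y in (0:ℝ)..π, w x y)
      = 2*(π:ℂ)*((a+d)/2 + (m:ℂ)*(cb:ℂ)*(d-a) - (m:ℂ)*(sb:ℂ)*(ca:ℂ)*(b+c)
          + Complex.I*(m:ℂ)*(sb:ℂ)*(sa:ℂ)*(b-c)) := by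
  have hin : ∀ x : ℝ, (∫ y in (0:ℝ)..π, w x y)
      = 2*((1/2:ℂ) * ((a+d)/2))
        + ((π:ℂ)/2)*((1/2:ℂ)*(-(m:ℂ)*((Real.cos x:ℂ)*(b+c) + Complex.I*(Real.sin x:ℂ)*(b-c)))
            + ((3/2:ℂ)*(sb:ℂ)*((ca:ℂ)*(Real.cos x:ℂ) - (sa:ℂ)*(Real.sin x:ℂ)))*((a+d)/2))
        + (4/3)*(((3/2:ℂ)*(sb:ℂ)*((ca:ℂ)*(Real.cos x:ℂ) - (sa:ℂ)*(Real.sin x:ℂ)))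
            * (-(m:ℂ)*((Real.cos x:ℂ)*(b+c) + Complex.I*(Real.sin x:ℂ)*(b-c))))
        + (2/3)*((-(3/2:ℂ)*(cb:ℂ))*((m:ℂ)*(a-d))) := by
    intro x
    rw [intervalIntegral.integral_congr (g := fun y : ℝ =>
        ((1/2:ℂ) * ((a+d)/2)) * (Real.sin y : ℂ)
        + ((1/2:ℂ)*((m:ℂ)*(a-d)) + (-(3/2:ℂ)*(cb:ℂ))*((a+d)/2)) * ((Real.sin y : ℂ) * (Real.cos y : ℂ))
        + ((1/2:ℂ)*(-(m:ℂ)*((Real.cos x:ℂ)*(b+c) + Complex.I*(Real.sin x:ℂ)*(b-c)))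
            + ((3/2:ℂ)*(sb:ℂ)*((ca:ℂ)*(Real.cos x:ℂ) - (sa:ℂ)*(Real.sin x:ℂ)))*((a+d)/2)) * (Real.sin y : ℂ)^2
        + (((3/2:ℂ)*(sb:ℂ)*((ca:ℂ)*(Real.cos x:ℂ) - (sa:ℂ)*(Real.sin x:ℂ)))
            * (-(m:ℂ)*((Real.cos x:ℂ)*(b+c) + Complex.I*(Real.sin x:ℂ)*(b-c)))) * (Real.sin y : ℂ)^3
        + ((-(3/2:ℂ)*(cb:ℂ))*((m:ℂ)*(a-d))) * ((Real.sin y : ℂ) * (Real.cos y : ℂ)^2)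
        + (((3/2:ℂ)*(sb:ℂ)*((ca:ℂ)*(Real.cos x:ℂ) - (sa:ℂ)*(Real.sin x:ℂ)))*((m:ℂ)*(a-d))
            + (-(3/2:ℂ)*(cb:ℂ))*(-(m:ℂ)*((Real.cos x:ℂ)*(b+c) + Complex.I*(Real.sin x:ℂ)*(b-c))))
          * ((Real.sin y : ℂ)^2 * (Real.cos y : ℂ)))
      (fun y _ => by rw [hw]; push_cast; ring), integral_basis_beta]
  rw [intervalIntegral.integral_congr (g := fun x : ℝ =>
      (2*((1/2:ℂ) * ((a+d)/2)) + (2/3)*((-(3/2:ℂ)*(cb:ℂ))*((m:ℂ)*(a-d))))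
      + (((π:ℂ)/2) * ((1/2:ℂ)*(-(m:ℂ))*(b+c) + (3/2:ℂ)*(sb:ℂ)*(ca:ℂ)*((a+d)/2))) * (Real.cos x : ℂ)
      + (((π:ℂ)/2) * ((1/2:ℂ)*(-(m:ℂ))*Complex.I*(b-c) - (3/2:ℂ)*(sb:ℂ)*(sa:ℂ)*((a+d)/2))) * (Real.sin x : ℂ)
      + (-2*(m:ℂ)*(sb:ℂ)*(ca:ℂ)*(b+c)) * (Real.cos x : ℂ)^2
      + (-2*(m:ℂ)*(sb:ℂ)*((ca:ℂ)*Complex.I*(b-c) - (sa:ℂ)*(b+c))) * ((Real.cos x : ℂ) * (Real.sin x : ℂ))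
      + (2*(m:ℂ)*(sb:ℂ)*(sa:ℂ)*Complex.I*(b-c)) * (Real.sin x : ℂ)^2)
    (fun x _ => by rw [hin x]; push_cast; ring), integral_basis_alpha]
  ring

lemma kernelX_self (m α β α' β' : ℝ) :
    kernelX m α β m α' β'
      = 1/2 * (1 + 3 * Real.cos α * Real.sin β * Real.cos α' * Real.sin β'
          - 3 * Real.sin α * Real.sin β * Real.sin α' * Real.sin β'
          - 3 * Real.cos β * Real.cos β') := by
  simp [kernelX]

lemma kernelX_ne (m m' : ℝ) (h : m ≠ m') (α β α' β' : ℝ) :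
    kernelX m α β m' α' β' = 0 := by
  simp [kernelX, h]

theorem kernelX_represents (ρ : Matrix (Fin 2) (Fin 2) ℂ) :
    ∀ m : ℝ, m = -(1/2) ∨ m = 1/2 → ∀ α β : ℝ,
      (1 / (2 * (Real.pi : ℂ))) *
        ∫ α' in (0:ℝ)..(2 * Real.pi), ∫ β' in (0:ℝ)..Real.pi,
          ((kernelX m α β (1/2) α' β' : ℂ) * tomogram ρ (1/2) α' β'
            + (kernelX m α β (-(1/2)) α' β' : ℂ) * tomogram ρ (-(1/2)) α' β')
          * (Real.sin β' : ℂ)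
      = (sigmaX * ρ * sigmaX * dequantizer m α β).trace := by
  intro m hm α β
  have hpi : (π:ℂ) ≠ 0 := Complex.ofReal_ne_zero.mpr Real.pi_ne_zero
  rcases hm with h | h <;> subst h
  · have key := master (ρ 0 0) (ρ 0 1) (ρ 1 0) (ρ 1 1) (-(1/2)) (Real.cos α) (Real.sin α)
      (Real.cos β) (Real.sin β)
      (fun α' β' => ((kernelX (-(1/2)) α β (1/2) α' β' : ℂ) * tomogram ρ (1/2) α' β'
            + (kernelX (-(1/2)) α β (-(1/2)) α' β' : ℂ) * tomogram ρ (-(1/2)) α' β')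
          * (Real.sin β' : ℂ))
      (fun x y => by
        simp only [kernelX_ne (-(1/2):ℝ) (1/2) (by norm_num), kernelX_self, tomogram_eq]
        push_cast
        ring)
    rw [key, rhs_eq]
    field_simp
    ring
  · have key := master (ρ 0 0) (ρ 0 1) (ρ 1 0) (ρ 1 1) (1/2) (Real.cos α) (Real.sin α)
      (Real.cos β) (Real.sin β)
      (fun α' β' => ((kernelX (1/2) α β (1/2) α' β' : ℂ) * tomogram ρ (1/2) α' β'
            + (kernelX (1/2) α β (-(1/2)) α' β' : ℂ) * tomogram ρ (-(1/2)) α' β')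
          * (Real.sin β' : ℂ))
      (fun x y => by
        simp only [kernelX_ne (1/2:ℝ) (-(1/2)) (by norm_num), kernelX_self, tomogram_eq]
        push_cast
        ring)
    rw [key, rhs_eq]
    field_simp
    ring
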